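/- Let d be the largest real root of x³ − 2x² − x + 1 and e = d² − d − 1. Suppose (r₁, r₂, r₃) is a triple of real numbers such that the symmetric matrix U with rows (1/d, √e/d, √d/d), (√e/d, (e/d)·r₁, √(e/d)·r₂), (√d/d, √(e/d)·r₂, r₃) satisfies U² = I. Then (r₁, r₂, r₃) equals either (d² − 4d + 3, d² − 3d + 2, d² − 3d + 1) or (−d² + 2d + 1, −d² + d + 2, −d² + d + 3). -/

import Mathlib

theorem stmt_12 (d e r₁ r₂ r₃ : ℝ)
    (hroot : d ^ 3 - 2 * d ^ 2 - d + 1 = 0)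
    (hmax : ∀ x : ℝ, x ^ 3 - 2 * x ^ 2 - x + 1 = 0 → x ≤ d)
    (he : e = d ^ 2 - d - 1)
    (U : Matrix (Fin 3) (Fin 3) ℝ)
    (hU : U = Matrix.of
      ![![1 / d, Real.sqrt e / d, Real.sqrt d / d],
        ![Real.sqrt e / d, (e / d) * r₁, Real.sqrt (e / d) * r₂],
        ![Real.sqrt d / d, Real.sqrt (e / d) * r₂, r₃]])
    (hinv : U * U = 1) :
    (r₁, r₂, r₃) = (d ^ 2 - 4 * d + 3, d ^ 2 - 3 * d + 2, d ^ 2 - 3 * d + 1) ∨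
    (r₁, r₂, r₃) = (-d ^ 2 + 2 * d + 1, -d ^ 2 + d + 2, -d ^ 2 + d + 3) := by
  -- d > 2 via IVT
  have hd2 : (2:ℝ) < d := by
    obtain ⟨c, hc, hfc⟩ : ∃ c ∈ Set.Icc (2.2:ℝ) 3, c ^ 3 - 2 * c ^ 2 - c + 1 = 0 := by
      have hcont : ContinuousOn (fun x : ℝ => x ^ 3 - 2 * x ^ 2 - x + 1) (Set.Icc 2.2 3) := by
        fun_prop
      have h := intermediate_value_Icc (by norm_num : (2.2:ℝ) ≤ 3) hcont
      have h0 : (0:ℝ) ∈ Set.Icc ((2.2:ℝ) ^ 3 - 2 * 2.2 ^ 2 - 2.2 + 1) ((3:ℝ) ^ 3 - 2 * 3 ^ 2 - 3 + 1) := by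
        norm_num
      obtain ⟨c, hc, hfc⟩ := h h0
      exact ⟨c, hc, hfc⟩
    have := hmax c hfc
    have := hc.1
    linarith
  have hd0 : (0:ℝ) < d := by linarith
  have he0 : (0:ℝ) < e := by rw [he]; nlinarith
  subst he
  set e : ℝ := d ^ 2 - d - 1 with hedef
  have hd : d ≠ 0 := hd0.ne'
  have hs : Real.sqrt e ^ 2 = e := Real.sq_sqrt he0.le
  have ht : Real.sqrt d ^ 2 = d := Real.sq_sqrt hd0.le
  have hspos : 0 < Real.sqrt e := Real.sqrt_pos.mpr he0
  have htpos : 0 < Real.sqrt d := Real.sqrt_pos.mpr hd0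
  -- extract entries
  have h01 : (U * U) 0 1 = (1 : Matrix (Fin 3) (Fin 3) ℝ) 0 1 := by rw [hinv]
  have h02 : (U * U) 0 2 = (1 : Matrix (Fin 3) (Fin 3) ℝ) 0 2 := by rw [hinv]
  have h11 : (U * U) 1 1 = (1 : Matrix (Fin 3) (Fin 3) ℝ) 1 1 := by rw [hinv]
  simp only [hU, Matrix.mul_apply, Fin.sum_univ_three, Matrix.of_apply, Matrix.cons_val',
    Matrix.cons_val_zero, Matrix.cons_val_one, Matrix.head_cons, Matrix.empty_val',
    Matrix.cons_val_fin_one, Matrix.head_fin_const, Matrix.cons_val_two, Matrix.tail_cons,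
    Matrix.one_apply_eq, Matrix.one_apply_ne (by decide : (0:Fin 3) ≠ 1),
    Matrix.one_apply_ne (by decide : (0:Fin 3) ≠ 2)] at h01 h02 h11
  field_simp at h01 h02 h11
  have hk : Real.sqrt d * Real.sqrt (e / d) = Real.sqrt e := by
    rw [← Real.sqrt_mul hd0.le]; congr 1; field_simp
  have hq' : d * Real.sqrt (e / d) ^ 2 = e := by
    rw [Real.sq_sqrt (div_nonneg he0.le hd0.le)]; field_simp
  have E1 : 1 + e * r₁ + d * r₂ = 0 := by
    have h : Real.sqrt e * Real.sqrt d * d * (1 + e * r₁ + d * r₂) = 0 := by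
      linear_combination Real.sqrt d * d * h01 - Real.sqrt d * d * d * r₂ * hk
    have h' := mul_eq_zero.mp h
    rcases h' with h' | h'
    · rcases mul_eq_zero.mp h' with h'' | h''
      · rcases mul_eq_zero.mp h'' with h3 | h3
        · exact absurd h3 hspos.ne'
        · exact absurd h3 htpos.ne'
      · exact absurd h'' hd
    · exact h'
  have E2 : 1 + e * r₂ + d * r₃ = 0 := by
    have h : d ^ 3 * (1 + e * r₂ + d * r₃) = 0 := by
      linear_combination d ^ 2 * Real.sqrt d * h02 - d ^ 2 * ht - d ^ 3 * r₂ * Real.sqrt e * hk - d ^ 3 * r₃ * ht - d ^ 3 * r₂ * hs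
    rcases mul_eq_zero.mp h with h' | h'
    · exact absurd h' (pow_ne_zero 3 hd)
    · exact h'
  have E3 : e + e ^ 2 * r₁ ^ 2 + e * d * r₂ ^ 2 = d ^ 2 := by
    have h : d * (e + e ^ 2 * r₁ ^ 2 + e * d * r₂ ^ 2 - d ^ 2) = 0 := by
      linear_combination d * h11 - d * hs - d ^ 2 * r₂ ^ 2 * hq'
    rcases mul_eq_zero.mp h with h' | h'
    · exact absurd h' hd
    · linarith
  -- solve
  have key : (r₁ - (d ^ 2 - 4 * d + 3)) * (r₁ - (-d ^ 2 + 2 * d + 1)) = 0 := by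
    have h : e ^ 2 * (d + e) * ((r₁ - (d ^ 2 - 4 * d + 3)) * (r₁ - (-d ^ 2 + 2 * d + 1))) = 0 := by
      linear_combination d * E3 - e * (d * r₂ - 1 - e * r₁) * E1 -
        (d^7 - 6*d^6 + 9*d^5 - 2*d^4*r₁ + 5*d^4 + 4*d^3*r₁ - 16*d^3 + 2*d^2*r₁ - 4*d*r₁ + 8*d - 2*r₁ + 2) * hroot
    have hne : e ^ 2 * (d + e) ≠ 0 := by positivity
    exact (mul_eq_zero.mp h).resolve_left hne
  rcases mul_eq_zero.mp key with h | h
  · left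
    have hr1 : r₁ = d ^ 2 - 4 * d + 3 := by linarith
    have hr2 : r₂ = d ^ 2 - 3 * d + 2 := by
      have : d * r₂ = d * (d ^ 2 - 3 * d + 2) := by
        linear_combination E1 - e * hr1 + (2 - d) * hroot
      exact mul_left_cancel₀ hd this
    have hr3 : r₃ = d ^ 2 - 3 * d + 1 := by
      have : d * r₃ = d * (d ^ 2 - 3 * d + 1) := by
        linear_combination E2 - e * hr2 + (1 - d) * hroot
      exact mul_left_cancel₀ hd this
    simp [hr1, hr2, hr3]
  · right
    have hr1 : r₁ = -d ^ 2 + 2 * d + 1 := by linarith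
    have hr2 : r₂ = -d ^ 2 + d + 2 := by
      have : d * r₂ = d * (-d ^ 2 + d + 2) := by
        linear_combination E1 - e * hr1 + d * hroot
      exact mul_left_cancel₀ hd this
    have hr3 : r₃ = -d ^ 2 + d + 3 := by
      have : d * r₃ = d * (-d ^ 2 + d + 3) := by
        linear_combination E2 - e * hr2 + (d + 1) * hroot
      exact mul_left_cancel₀ hd this
    simp [hr1, hr2, hr3]
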